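/- (Tableau criterion) For w, v ∈ S_n, let w_{i,k} denote the i-th smallest element among w(1),...,w(k), and similarly v_{i,k}. Then w ≤ v in Bruhat order if and only if w_{i,k} ≤ v_{i,k} for all k in the descent set D_R(w) = {i : w(i) > w(i+1)} and all 1 ≤ i ≤ k. -/

import Mathlib

open Equiv Finset Fin.NatCast

/-- The simple transposition `s_i = (i, i+1)` (1-indexed letters), as a
permutation of `Fin n` (0-indexed letters `i-1`, `i`). -/
def sT (n : ℕ) [NeZero n] (i : ℕ) : Equiv.Perm (Fin n) :=
  Equiv.swap ((i - 1 : ℕ) : Fin n) ((i : ℕ) : Fin n)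

/-- The Bruhat length of a permutation: its number of inversions. -/
def lenP (n : ℕ) (w : Equiv.Perm (Fin n)) : ℕ :=
  (Finset.univ.filter (fun p : Fin n × Fin n => p.1 < p.2 ∧ w p.2 < w p.1)).card

/-- Bruhat order on `S_n`: the reflexive-transitive closure of
"multiply on the right by a transposition and increase length". -/
def bruhatLE (n : ℕ) (u w : Equiv.Perm (Fin n)) : Prop :=
  Relation.ReflTransGen
    (fun a b => (∃ i j : Fin n, i ≠ j ∧ b = a * Equiv.swap i j) ∧ lenP n a < lenP n b) u w

/-- `u_ℓ(x) = s_{ℓ-1} s_{ℓ-2} ⋯ s_{ℓ-x_ℓ}` (identity if `x_ℓ = 0`). -/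
def uPerm (n : ℕ) [NeZero n] (ℓ m : ℕ) : Equiv.Perm (Fin n) :=
  ((List.range m).map (fun t => sT n (ℓ - 1 - t))).prod

/-- `ω(x) = u_2(x) u_3(x) ⋯ u_n(x)`. -/
def omegaPerm (n : ℕ) [NeZero n] (x : ℕ → ℕ) : Equiv.Perm (Fin n) :=
  ((List.range (n - 1)).map (fun k => uPerm n (k + 2) (x (k + 2)))).prod

/-- The increasing rearrangement of the first `k` entries `w(1), …, w(k)` of the
one-line notation of `w` (letters `1, …, n`). -/
def sortedPrefix (n : ℕ) (w : Equiv.Perm (Fin n)) (k : ℕ) : List ℕ :=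
  ((Finset.univ.filter fun j : Fin n => (j : ℕ) < k).image fun j => (w j : ℕ) + 1).sort (· ≤ ·)

def cnt {n : ℕ} (w : Perm (Fin n)) (m b : ℕ) : ℕ :=
  ((univ : Finset (Fin n)).filter fun p : Fin n => (p : ℕ) < m ∧ (w p : ℕ) + 1 ≤ b).card

lemma cnt_zero {n : ℕ} (w : Perm (Fin n)) (b : ℕ) : cnt w 0 b = 0 := by simp [cnt]

lemma cnt_mono_m {n : ℕ} (w : Perm (Fin n)) {m m' : ℕ} (h : m ≤ m') (b : ℕ) :
    cnt w m b ≤ cnt w m' b := by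
  apply Finset.card_le_card
  intro p hp
  simp only [Finset.mem_filter] at *
  exact ⟨hp.1, lt_of_lt_of_le hp.2.1 h, hp.2.2⟩

lemma cnt_succ {n : ℕ} (w : Perm (Fin n)) (m : ℕ) (h : m < n) (b : ℕ) :
    cnt w (m + 1) b = cnt w m b + (if (w ⟨m, h⟩ : ℕ) + 1 ≤ b then 1 else 0) := by
  classical
  unfold cnt
  have hsplit : ((univ : Finset (Fin n)).filter fun p : Fin n => (p : ℕ) < m + 1 ∧ (w p : ℕ) + 1 ≤ b)
      = ((univ : Finset (Fin n)).filter fun p : Fin n => (p : ℕ) < m ∧ (w p : ℕ) + 1 ≤ b)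
        ∪ ((univ : Finset (Fin n)).filter fun p : Fin n => p = ⟨m, h⟩ ∧ (w p : ℕ) + 1 ≤ b) := by
    ext p
    simp only [Finset.mem_filter, Finset.mem_union, Finset.mem_univ, true_and]
    constructor
    · rintro ⟨h1, h2⟩
      rcases Nat.lt_succ_iff_lt_or_eq.mp h1 with h1 | h1
      · exact Or.inl ⟨h1, h2⟩
      · exact Or.inr ⟨Fin.ext h1, h2⟩
    · rintro (⟨h1, h2⟩ | ⟨h1, h2⟩)
      · exact ⟨Nat.lt_succ_of_lt h1, h2⟩
      · subst h1; exact ⟨Nat.lt_succ_self m, h2⟩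
  rw [hsplit, Finset.card_union_of_disjoint]
  · congr 1
    split_ifs with hb
    · rw [show ((univ : Finset (Fin n)).filter fun p : Fin n => p = ⟨m, h⟩ ∧ (w p : ℕ) + 1 ≤ b) = {⟨m, h⟩} from ?_]
      · simp
      · ext p; simp only [Finset.mem_filter, Finset.mem_univ, true_and, Finset.mem_singleton]
        constructor
        · rintro ⟨h1, _⟩; exact h1
        · rintro rfl; exact ⟨rfl, hb⟩
    · rw [Finset.card_eq_zero]
      ext p; simp only [Finset.mem_filter, Finset.mem_univ, true_and, Finset.notMem_empty, iff_false]
      rintro ⟨rfl, h2⟩; exact hb h2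
  · rw [Finset.disjoint_left]
    intro p hp1 hp2
    simp only [Finset.mem_filter] at hp1 hp2
    rw [hp2.2.1] at hp1
    exact absurd hp1.2.1 (by simp)

lemma cnt_stable {n : ℕ} (w : Perm (Fin n)) {m : ℕ} (h : n ≤ m) (b : ℕ) :
    cnt w m b = cnt w n b := by
  unfold cnt
  congr 1
  ext p
  simp only [Finset.mem_filter]
  have := p.isLt
  constructor
  · rintro ⟨_, _, h2⟩; exact ⟨by simp, this, h2⟩
  · rintro ⟨_, _, h2⟩; exact ⟨by simp, lt_of_lt_of_le this h, h2⟩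

lemma cnt_top {n : ℕ} (w v : Perm (Fin n)) {m : ℕ} (h : n ≤ m) (b : ℕ) :
    cnt w m b = cnt v m b := by
  rw [cnt_stable w h, cnt_stable v h]
  unfold cnt
  apply Finset.card_bij (fun p _ => v.symm (w p))
  · intro p hp
    simp only [Finset.mem_filter, Finset.mem_univ, true_and] at *
    exact ⟨(v.symm (w p)).isLt, by simpa using hp.2⟩
  · intro p _ q _ hpq
    exact w.injective (v.symm.injective hpq)
  · intro q hq
    simp only [Finset.mem_filter, Finset.mem_univ, true_and] at hq
    refine ⟨w.symm (v q), ?_, by simp⟩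
    simp only [Finset.mem_filter, Finset.mem_univ, true_and]
    exact ⟨(w.symm (v q)).isLt, by simpa using hq.2⟩

lemma cnt_mono_b {n : ℕ} (w : Perm (Fin n)) (m : ℕ) {b b' : ℕ} (h : b ≤ b') :
    cnt w m b ≤ cnt w m b' := by
  apply Finset.card_le_card
  intro p hp
  simp only [Finset.mem_filter] at *
  exact ⟨hp.1, hp.2.1, le_trans hp.2.2 h⟩

lemma sorted_getD_le_iff {b : ℕ} : ∀ (l : List ℕ), l.Pairwise (· ≤ ·) → ∀ i, i < l.length →
    (l.getD i 0 ≤ b ↔ i < l.countP (fun x => decide (x ≤ b))) := by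
  intro l
  induction l with
  | nil => intro _ i hi; simp at hi
  | cons x xs ih =>
    intro hs i hi
    have hs' : xs.Pairwise (· ≤ ·) := hs.of_cons
    have hx : ∀ y ∈ xs, x ≤ y := fun y hy => List.rel_of_pairwise_cons hs hy
    rw [List.countP_cons]
    cases i with
    | zero =>
      simp only [List.getD_cons_zero]
      constructor
      · intro h
        have : decide (x ≤ b) = true := by simp [h]
        simp [this]
      · intro h
        by_contra hxb
        push_neg at hxb
        have h1 : decide (x ≤ b) = false := by simp; omega
        rw [h1] at h
        simp only [Bool.false_eq_true, if_false] at h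
        have : 0 < xs.countP (fun x => decide (x ≤ b)) := by omega
        rw [List.countP_pos_iff] at this
        obtain ⟨y, hy, hyb⟩ := this
        simp at hyb
        exact absurd (le_trans (hx y hy) hyb) (by omega)
    | succ i =>
      simp only [List.getD_cons_succ]
      have hi' : i < xs.length := by simpa using hi
      by_cases hxb : x ≤ b
      · rw [ih hs' i hi']
        simp [hxb]
      · have hc : xs.countP (fun x => decide (x ≤ b)) = 0 := by
          rw [List.countP_eq_zero]
          intro y hy
          simp only [decide_eq_true_eq]
          intro hyb
          exact hxb (le_trans (hx y hy) hyb)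
        have : ¬ (xs.getD i 0 ≤ b) := by
          rw [ih hs' i hi', hc]
          omega
        rw [hc]
        simp only [hxb]
        constructor
        · intro h; exact absurd h this
        · intro h; simp at h

lemma filter_card_eq_countP (S : Finset ℕ) (b : ℕ) :
    (S.filter (· ≤ b)).card = (S.sort (· ≤ ·)).countP (fun x => decide (x ≤ b)) := by
  classical
  rw [Finset.card, Finset.filter_val, ← Multiset.countP_eq_card_filter,
    ← Finset.sort_eq S (· ≤ ·), Multiset.coe_countP]

lemma card_prefSet {n : ℕ} (w : Perm (Fin n)) {k : ℕ} (hk : k ≤ n) :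
    ((Finset.univ.filter fun j : Fin n => (j : ℕ) < k).image fun j => (w j : ℕ) + 1).card = k := by
  rw [Finset.card_image_of_injective _ (fun a b hab => w.injective (Fin.ext (by omega)))]
  have : (Finset.univ.filter fun j : Fin n => (j : ℕ) < k)
      = (Finset.univ : Finset (Fin k)).image (Fin.castLE hk) := by
    ext j
    simp only [Finset.mem_filter, Finset.mem_univ, true_and, Finset.mem_image]
    constructor
    · intro hj; exact ⟨⟨j, hj⟩, by ext; simp⟩
    · rintro ⟨i, _, rfl⟩; exact i.isLt
  rw [this, Finset.card_image_of_injective _ (Fin.castLE_injective hk)]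
  simp

lemma length_sortedPrefix {n : ℕ} (w : Perm (Fin n)) {k : ℕ} (hk : k ≤ n) :
    (sortedPrefix n w k).length = k := by
  rw [sortedPrefix, Finset.length_sort, card_prefSet w hk]

lemma countP_sortedPrefix {n : ℕ} (w : Perm (Fin n)) (k b : ℕ) :
    (sortedPrefix n w k).countP (fun x => decide (x ≤ b)) = cnt w k b := by
  have h1 : (sortedPrefix n w k).countP (fun x => decide (x ≤ b))
      = (((Finset.univ.filter fun j : Fin n => (j : ℕ) < k).image fun j => (w j : ℕ) + 1).filter
          (· ≤ b)).card := by
    rw [sortedPrefix]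
    classical
    rw [Finset.card, Finset.filter_val, ← Multiset.countP_eq_card_filter,
      ← Finset.sort_eq _ (· ≤ ·), Multiset.coe_countP]
  rw [h1]
  rw [Finset.filter_image]
  rw [Finset.card_image_of_injective _ (fun a b hab => w.injective (Fin.ext (by omega)))]
  rw [cnt, Finset.filter_filter]

lemma sortedPrefix_sorted {n : ℕ} (w : Perm (Fin n)) (k : ℕ) :
    (sortedPrefix n w k).Pairwise (· ≤ ·) := Finset.pairwise_sort _ _

lemma bridge {n : ℕ} (w v : Perm (Fin n)) {k : ℕ} (hk : k ≤ n) :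
    (∀ i, i < k → (sortedPrefix n w k).getD i 0 ≤ (sortedPrefix n v k).getD i 0)
    ↔ ∀ b, cnt v k b ≤ cnt w k b := by
  constructor
  · intro h b
    rw [← countP_sortedPrefix v k b, ← countP_sortedPrefix w k b]
    set cv := (sortedPrefix n v k).countP (fun x => decide (x ≤ b)) with hcv
    rcases Nat.eq_zero_or_pos cv with h0 | h0
    · omega
    · have hcvk : cv ≤ k := by
        rw [hcv]
        exact le_trans List.countP_le_length (le_of_eq (length_sortedPrefix v hk))
      have hik : cv - 1 < k := by omega
      have h1 : (sortedPrefix n v k).getD (cv - 1) 0 ≤ b := by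
        rw [sorted_getD_le_iff _ (sortedPrefix_sorted v k) _
          (by rw [length_sortedPrefix v hk]; exact hik)]
        omega
      have h2 : (sortedPrefix n w k).getD (cv - 1) 0 ≤ b := le_trans (h _ hik) h1
      rw [sorted_getD_le_iff _ (sortedPrefix_sorted w k) _
        (by rw [length_sortedPrefix w hk]; exact hik)] at h2
      omega
  · intro h i hik
    set b := (sortedPrefix n v k).getD i 0 with hb
    have h1 : i < (sortedPrefix n v k).countP (fun x => decide (x ≤ b)) := by
      rw [← sorted_getD_le_iff _ (sortedPrefix_sorted v k) _
        (by rw [length_sortedPrefix v hk]; exact hik)]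
    have h2 : i < (sortedPrefix n w k).countP (fun x => decide (x ≤ b)) := by
      rw [countP_sortedPrefix] at h1 ⊢
      exact lt_of_lt_of_le h1 (h b)
    rw [← sorted_getD_le_iff _ (sortedPrefix_sorted w k) _
      (by rw [length_sortedPrefix w hk]; exact hik)] at h2
    exact h2

def phiMap {n : ℕ} (a : Perm (Fin n)) (i j : Fin n) (p : Fin n × Fin n) : Fin n × Fin n :=
  if p.2 = i then (if a j < a p.1 then (p.1, i) else (p.1, j))
  else if p.1 = j then (if a p.2 < a i then (j, p.2) else (i, p.2))
  else p

def psiMap {n : ℕ} (a : Perm (Fin n)) (i j : Fin n) (r : Fin n × Fin n) : Fin n × Fin n :=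
  if r.2 = i then r
  else if r.2 = j then (if r.1 = i then r else if a r.1 < a j then (r.1, i) else r)
  else if r.1 = i ∧ a i < a r.2 then (j, r.2) else r

lemma lenP_lt_swap {n : ℕ} (a : Perm (Fin n)) (i j : Fin n) (hij : i < j) (hv : a i < a j) :
    lenP n a + 1 ≤ lenP n (a * Equiv.swap i j) := by
  classical
  set b := a * Equiv.swap i j with hb
  have hne : i ≠ j := ne_of_lt hij
  have hbi : b i = a j := by simp [hb, Equiv.Perm.mul_apply]
  have hbj : b j = a i := by simp [hb, Equiv.Perm.mul_apply]
  have hbx : ∀ x : Fin n, x ≠ i → x ≠ j → b x = a x := by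
    intro x h1 h2
    simp [hb, Equiv.Perm.mul_apply, Equiv.swap_apply_of_ne_of_ne h1 h2]
  have hainj : ∀ {x y : Fin n}, x ≠ y → a x ≠ a y := fun h => fun he => h (a.injective he)
  set A := (Finset.univ.filter (fun p : Fin n × Fin n => (p.1 < p.2 ∧ a p.2 < a p.1) ∨ p = (i, j)))
    with hA
  have hcardA : A.card = lenP n a + 1 := by
    rw [hA, Finset.filter_or, Finset.card_union_of_disjoint]
    · congr 1
      rw [Finset.filter_eq', if_pos (Finset.mem_univ _), Finset.card_singleton]
    · rw [Finset.disjoint_right]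
      intro p hp1 hp2
      simp only [Finset.mem_filter, Finset.mem_univ, true_and] at hp1 hp2
      rw [hp1] at hp2
      exact absurd hp2.2 (not_lt_of_gt hv)
  rw [← hcardA]
  apply Finset.card_le_card_of_injOn (phiMap a i j)
  · -- maps into inversions of b
    intro p hp
    simp only [hA, Finset.mem_coe, Finset.mem_filter, Finset.mem_univ, true_and] at hp ⊢
    unfold phiMap
    split_ifs with hc1 hc2 hc3 hc4
    · -- p.2 = i, a j < a p.1 ; image (p.1, i)
      rcases hp with ⟨hlt, hinv⟩ | heq
      · rw [hc1] at hlt hinv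
        have h1i : p.1 ≠ i := ne_of_lt hlt
        have h1j : p.1 ≠ j := ne_of_lt (lt_trans hlt hij)
        exact ⟨hlt, by show b i < b p.1; rw [hbi, hbx p.1 h1i h1j]; exact hc2⟩
      · rw [Prod.ext_iff] at heq
        exact absurd (heq.2.symm.trans hc1) hne.symm
    · -- p.2 = i, ¬(a j < a p.1) ; image (p.1, j)
      rcases hp with ⟨hlt, hinv⟩ | heq
      · rw [hc1] at hlt hinv
        have h1i : p.1 ≠ i := ne_of_lt hlt
        have h1j : p.1 ≠ j := ne_of_lt (lt_trans hlt hij)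
        refine ⟨lt_trans hlt hij, ?_⟩
        show b j < b p.1
        rw [hbj, hbx p.1 h1i h1j]
        exact hinv
      · rw [Prod.ext_iff] at heq
        exact absurd (heq.2.symm.trans hc1) hne.symm
    · -- ¬(p.2 = i), p.1 = j, a p.2 < a i ; image (j, p.2)
      rcases hp with ⟨hlt, hinv⟩ | heq
      · rw [hc3] at hlt
        have h2j : p.2 ≠ j := (ne_of_lt hlt).symm
        exact ⟨hlt, by show b p.2 < b j; rw [hbj, hbx p.2 hc1 h2j]; exact hc4⟩
      · rw [Prod.ext_iff] at heq
        exact absurd (heq.1.symm.trans hc3) hne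
    · -- ¬(p.2 = i), p.1 = j, ¬(a p.2 < a i) ; image (i, p.2)
      rcases hp with ⟨hlt, hinv⟩ | heq
      · rw [hc3] at hlt hinv
        have h2j : p.2 ≠ j := (ne_of_lt hlt).symm
        refine ⟨lt_trans hij hlt, ?_⟩
        show b p.2 < b i
        rw [hbi, hbx p.2 hc1 h2j]
        exact hinv
      · rw [Prod.ext_iff] at heq
        exact absurd (heq.1.symm.trans hc3) hne
    · -- identity branch
      rcases hp with ⟨hlt, hinv⟩ | heq
      · refine ⟨hlt, ?_⟩
        by_cases h1i : p.1 = i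
        · have h2j : p.2 ≠ j := by
            intro h
            rw [h1i, h] at hinv
            exact absurd hinv (not_lt_of_gt hv)
          rw [h1i] at hinv ⊢
          rw [hbi, hbx p.2 hc1 h2j]
          exact lt_trans hinv hv
        · by_cases h2j : p.2 = j
          · rw [h2j] at hinv ⊢
            rw [hbj, hbx p.1 h1i hc3]
            exact lt_trans hv hinv
          · rw [hbx p.1 h1i hc3, hbx p.2 hc1 h2j]
            exact hinv
      · rw [Prod.ext_iff] at heq
        refine ⟨?_, ?_⟩
        · rw [heq.1, heq.2]; exact hij
        · rw [heq.1, heq.2, hbi, hbj]; exact hv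
  · -- injective
    intro p hp q hq hpq
    rw [Finset.mem_coe] at hp hq
    have hrec : ∀ r ∈ A, psiMap a i j (phiMap a i j r) = r := by
      intro p hp
      simp only [hA, Finset.mem_filter, Finset.mem_univ, true_and] at hp
      unfold phiMap
      split_ifs with hc1 hc2 hc3 hc4
      · -- r = (p.1, i)
        unfold psiMap
        rw [if_pos rfl]
        exact Prod.ext rfl hc1.symm
      · -- r = (p.1, j) with p.2 = i, ¬(a j < a p.1)
        rcases hp with ⟨hlt, hinv⟩ | heq
        · rw [hc1] at hlt hinv
          have h1i : p.1 ≠ i := ne_of_lt hlt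
          have h1j : p.1 ≠ j := ne_of_lt (lt_trans hlt hij)
          unfold psiMap
          rw [if_neg (by exact hne.symm), if_pos rfl, if_neg h1i,
            if_pos (lt_of_le_of_ne (le_of_not_gt hc2) (hainj h1j))]
          exact Prod.ext rfl hc1.symm
        · rw [Prod.ext_iff] at heq
          exact absurd (heq.2.symm.trans hc1) hne.symm
      · -- r = (j, p.2), p.1 = j, a p.2 < a i
        rcases hp with ⟨hlt, hinv⟩ | heq
        · rw [hc3] at hlt
          have h2j : p.2 ≠ j := (ne_of_lt hlt).symm
          unfold psiMap
          rw [if_neg hc1, if_neg h2j, if_neg (by push_neg; intro h; exact absurd h (Ne.symm hne))]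
          exact Prod.ext hc3.symm rfl
        · rw [Prod.ext_iff] at heq
          exact absurd (heq.1.symm.trans hc3) hne
      · -- r = (i, p.2), p.1 = j, ¬(a p.2 < a i)
        rcases hp with ⟨hlt, hinv⟩ | heq
        · rw [hc3] at hlt
          have h2j : p.2 ≠ j := (ne_of_lt hlt).symm
          unfold psiMap
          rw [if_neg hc1, if_neg h2j,
            if_pos ⟨rfl, lt_of_le_of_ne (le_of_not_gt hc4) (hainj (Ne.symm hc1))⟩]
          exact Prod.ext hc3.symm rfl
        · rw [Prod.ext_iff] at heq
          exact absurd (heq.1.symm.trans hc3) hne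
      · -- identity
        unfold psiMap
        rw [if_neg hc1]
        by_cases h2j : p.2 = j
        · rw [if_pos h2j]
          by_cases h1i : p.1 = i
          · rw [if_pos h1i]
          · rw [if_neg h1i]
            rcases hp with ⟨hlt, hinv⟩ | heq
            · rw [h2j] at hinv
              rw [if_neg (not_lt_of_gt hinv)]
            · rw [Prod.ext_iff] at heq
              exact absurd heq.1 h1i
        · rw [if_neg h2j]
          rcases hp with ⟨hlt, hinv⟩ | heq
          · by_cases h1i : p.1 = i
            · rw [h1i] at hinv
              rw [if_neg (by push_neg; intro _; exact le_of_lt hinv)]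
            · rw [if_neg (by push_neg; intro h; exact absurd h h1i)]
          · rw [Prod.ext_iff] at heq
            exact absurd heq.2 h2j
    rw [← hrec p hp, ← hrec q hq, hpq]

lemma val_lt_of_len {n : ℕ} (a : Perm (Fin n)) (i j : Fin n) (hij : (i : ℕ) < (j : ℕ))
    (hlen : lenP n a < lenP n (a * Equiv.swap i j)) : (a i : ℕ) < (a j : ℕ) := by
  by_contra h
  push_neg at h
  have hne : i ≠ j := fun he => by rw [he] at hij; exact lt_irrefl _ hij
  have hne' : a j ≠ a i := fun he => hne (a.injective he).symm
  have hv : (a * Equiv.swap i j) i < (a * Equiv.swap i j) j := by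
    have h1 : (a * Equiv.swap i j) i = a j := by simp [Equiv.Perm.mul_apply]
    have h2 : (a * Equiv.swap i j) j = a i := by simp [Equiv.Perm.mul_apply]
    rw [h1, h2]
    exact lt_of_le_of_ne (by exact h) hne'
  have := lenP_lt_swap (a * Equiv.swap i j) i j hij hv
  rw [mul_assoc, Equiv.swap_mul_self, mul_one] at this
  omega

lemma cnt_swap_le {n : ℕ} (a : Perm (Fin n)) (i j : Fin n) (hij : (i : ℕ) < (j : ℕ))
    (hval : (a i : ℕ) < (a j : ℕ)) (m t : ℕ) :
    cnt (a * Equiv.swap i j) m t ≤ cnt a m t := by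
  classical
  have hne : i ≠ j := fun he => by rw [he] at hij; exact lt_irrefl _ hij
  unfold cnt
  apply Finset.card_le_card_of_injOn
    (fun p => if p = j ∧ ¬ ((a j : ℕ) + 1 ≤ t) then i else p)
  · intro p hp
    simp only [Finset.mem_coe, Finset.mem_filter, Finset.mem_univ, true_and] at hp ⊢
    by_cases hpj : p = j
    · rw [hpj] at hp ⊢
      have hpi : (a ((Equiv.swap i j) j) : ℕ) = (a i : ℕ) := by rw [Equiv.swap_apply_right]
      rw [Equiv.Perm.mul_apply] at hp
      rw [hpi] at hp
      by_cases hjt : (a j : ℕ) + 1 ≤ t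
      · rw [if_neg (by tauto)]
        exact ⟨hp.1, hjt⟩
      · rw [if_pos ⟨rfl, hjt⟩]
        exact ⟨lt_trans hij hp.1, hp.2⟩
    · rw [if_neg (by tauto)]
      by_cases hpi : p = i
      · rw [hpi] at hp ⊢
        rw [Equiv.Perm.mul_apply, Equiv.swap_apply_left] at hp
        exact ⟨hp.1, by omega⟩
      · rw [Equiv.Perm.mul_apply, Equiv.swap_apply_of_ne_of_ne hpi hpj] at hp
        exact hp
  · intro p hp q hq hpq
    simp only [Finset.mem_coe, Finset.mem_filter, Finset.mem_univ, true_and] at hp hq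
    dsimp only at hpq
    by_cases hpj : p = j ∧ ¬ ((a j : ℕ) + 1 ≤ t) <;> by_cases hqj : q = j ∧ ¬ ((a j : ℕ) + 1 ≤ t)
    · rw [hpj.1, hqj.1]
    · rw [if_pos hpj, if_neg hqj] at hpq
      subst hpq
      rw [Equiv.Perm.mul_apply, Equiv.swap_apply_left] at hq
      exact absurd hq.2 hpj.2
    · rw [if_neg hpj, if_pos hqj] at hpq
      rw [← hpq] at hp
      rw [Equiv.Perm.mul_apply, Equiv.swap_apply_left] at hp
      exact absurd hp.2 hqj.2
    · rw [if_neg hpj, if_neg hqj] at hpq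
      exact hpq

lemma cnt_le_of_bruhat {n : ℕ} (w v : Perm (Fin n)) (h : bruhatLE n w v) (m t : ℕ) :
    cnt v m t ≤ cnt w m t := by
  unfold bruhatLE at h
  induction h using Relation.ReflTransGen.head_induction_on with
  | refl => exact le_refl _
  | head hstep _ ih =>
    rename_i a c _
    obtain ⟨⟨i, j, hne, rfl⟩, hlen⟩ := hstep
    refine le_trans ih ?_
    rcases lt_or_gt_of_ne (show (i : ℕ) ≠ (j : ℕ) from fun he => hne (Fin.ext he)) with hij | hij
    · exact cnt_swap_le a i j hij (val_lt_of_len a i j hij hlen) m t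
    · rw [Equiv.swap_comm] at hlen ⊢
      exact cnt_swap_le a j i hij (val_lt_of_len a j i hij hlen) m t

lemma cnt_succ' {n : ℕ} [NeZero n] (w : Perm (Fin n)) (m : ℕ) (h : m < n) (b : ℕ) :
    cnt w (m + 1) b = cnt w m b + (if (w ((m : ℕ) : Fin n) : ℕ) + 1 ≤ b then 1 else 0) := by
  have he : ((m : ℕ) : Fin n) = ⟨m, h⟩ := Fin.ext (by simp [Fin.val_cast_of_lt h])
  rw [cnt_succ w m h b, he]

lemma tab_to_dom {n : ℕ} [NeZero n] (w v : Perm (Fin n))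
    (hT : ∀ k, 1 ≤ k → k ≤ n - 1 →
      (w ((k : ℕ) : Fin n) : ℕ) < (w ((k - 1 : ℕ) : Fin n) : ℕ) →
      ∀ b, cnt v k b ≤ cnt w k b) :
    ∀ m b, cnt v m b ≤ cnt w m b := by
  have hn : 1 ≤ n := Nat.one_le_iff_ne_zero.mpr (NeZero.ne n)
  intro m b
  by_contra hcon
  push_neg at hcon
  -- downward propagation
  have down : ∀ j, 1 ≤ j → j ≤ n → cnt w j b < cnt v j b →
      (w ((j - 1 : ℕ) : Fin n) : ℕ) + 1 ≤ b → False := by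
    intro j
    induction j using Nat.strong_induction_on with
    | _ j IH =>
      intro h1 hjn hviol hlast
      rcases eq_or_lt_of_le hjn with rfl | hlt
      · rw [cnt_top w v (le_refl _) b] at hviol; omega
      · by_cases hdesc : (w ((j : ℕ) : Fin n) : ℕ) < (w ((j - 1 : ℕ) : Fin n) : ℕ)
        · exact absurd (hT j h1 (by omega) hdesc b) (by omega)
        · have hstep : cnt w j b = cnt w (j - 1) b + 1 := by
            have h2 := cnt_succ' w (j - 1) (by omega) b
            rw [if_pos hlast] at h2
            rw [show j - 1 + 1 = j by omega] at h2
            exact h2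
          have hstep2 : cnt v j b ≤ cnt v (j - 1) b + 1 := by
            have h2 := cnt_succ' v (j - 1) (by omega) b
            rw [show j - 1 + 1 = j by omega] at h2
            split_ifs at h2 <;> omega
          have hviol' : cnt w (j - 1) b < cnt v (j - 1) b := by omega
          rcases Nat.eq_zero_or_pos (j - 1) with h0 | hpos
          · rw [h0, cnt_zero, cnt_zero] at hviol'; omega
          · by_cases hlast' : (w ((j - 1 - 1 : ℕ) : Fin n) : ℕ) + 1 ≤ b
            · exact IH (j - 1) (by omega) hpos (by omega) hviol' hlast'
            · have hd : (w ((j - 1 : ℕ) : Fin n) : ℕ) < (w ((j - 1 - 1 : ℕ) : Fin n) : ℕ) := by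
                omega
              exact absurd (hT (j - 1) hpos (by omega) hd b) (by omega)
  -- upward propagation
  have up : ∀ t j, n - j ≤ t → 1 ≤ j → j ≤ n → cnt w j b < cnt v j b →
      b ≤ (w ((j - 1 : ℕ) : Fin n) : ℕ) → False := by
    intro t
    induction t with
    | zero =>
      intro j ht h1 hjn hviol _
      have : j = n := by omega
      subst this
      rw [cnt_top w v (le_refl _) b] at hviol; omega
    | succ t IH =>
      intro j ht h1 hjn hviol hlast
      rcases eq_or_lt_of_le hjn with rfl | hlt
      · rw [cnt_top w v (le_refl _) b] at hviol; omega
      · by_cases hdesc : (w ((j : ℕ) : Fin n) : ℕ) < (w ((j - 1 : ℕ) : Fin n) : ℕ)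
        · exact absurd (hT j h1 (by omega) hdesc b) (by omega)
        · -- ascent : w(j-1) < w(j)
          have hne : ((j - 1 : ℕ) : Fin n) ≠ ((j : ℕ) : Fin n) := by
            intro he
            have h1' := Fin.val_cast_of_lt (show j - 1 < n by omega)
            have h2' := Fin.val_cast_of_lt (show j < n by omega)
            rw [he] at h1'
            omega
          have hvne : (w ((j - 1 : ℕ) : Fin n) : ℕ) ≠ (w ((j : ℕ) : Fin n) : ℕ) := by
            intro he
            exact hne (w.injective (Fin.ext he))
          have hasc : (w ((j - 1 : ℕ) : Fin n) : ℕ) < (w ((j : ℕ) : Fin n) : ℕ) := by omega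
          have hstep : cnt w (j + 1) b = cnt w j b := by
            have h2 := cnt_succ' w j (by omega) b
            rw [if_neg (by omega)] at h2
            omega
          have hviol' : cnt w (j + 1) b < cnt v (j + 1) b :=
            lt_of_le_of_lt (le_of_eq hstep) (lt_of_lt_of_le hviol (cnt_mono_m v (by omega) b))
          have : b ≤ (w ((j + 1 - 1 : ℕ) : Fin n) : ℕ) := by
            rw [show j + 1 - 1 = j by omega]
            omega
          exact IH (j + 1) (by omega) (by omega) (by omega) hviol' this
  -- main case analysis
  rcases Nat.lt_or_ge m (n + 1) with hmn | hmn
  · rcases Nat.eq_zero_or_pos m with rfl | hm1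
    · rw [cnt_zero, cnt_zero] at hcon; omega
    · by_cases hlast : (w ((m - 1 : ℕ) : Fin n) : ℕ) + 1 ≤ b
      · exact down m hm1 (by omega) hcon hlast
      · exact up n m (by omega) hm1 (by omega) hcon (by omega)
  · rw [cnt_stable w (by omega) b, cnt_stable v (by omega) b, cnt_top w v (le_refl _) b] at hcon
    omega

def W {n : ℕ} (w : Perm (Fin n)) (k m b : ℕ) : ℕ :=
  ((univ : Finset (Fin n)).filter fun p : Fin n =>
    k ≤ (p : ℕ) ∧ (p : ℕ) < m ∧ (w p : ℕ) + 1 ≤ b).card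

lemma cnt_split {n : ℕ} (w : Perm (Fin n)) {k m : ℕ} (h : k ≤ m) (b : ℕ) :
    cnt w m b = cnt w k b + W w k m b := by
  classical
  unfold cnt W
  rw [← Finset.card_union_of_disjoint]
  · congr 1
    ext p
    simp only [Finset.mem_filter, Finset.mem_univ, true_and, Finset.mem_union]
    constructor
    · rintro ⟨h1, h2⟩
      rcases Nat.lt_or_ge (p : ℕ) k with h3 | h3
      · exact Or.inl ⟨h3, h2⟩
      · exact Or.inr ⟨h3, h1, h2⟩
    · rintro (⟨h1, h2⟩ | ⟨h1, h2, h3⟩)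
      · exact ⟨lt_of_lt_of_le h1 h, h2⟩
      · exact ⟨h2, h3⟩
  · rw [Finset.disjoint_left]
    intro p hp1 hp2
    simp only [Finset.mem_filter] at hp1 hp2
    omega

lemma W_mono_b {n : ℕ} (w : Perm (Fin n)) (k m : ℕ) {t t' : ℕ} (h : t ≤ t') :
    W w k m t ≤ W w k m t' := by
  apply Finset.card_le_card
  intro p hp
  simp only [Finset.mem_filter] at *
  exact ⟨hp.1, hp.2.1, hp.2.2.1, le_trans hp.2.2.2 h⟩

lemma cnt_prefix_eq {n : ℕ} (w v : Perm (Fin n)) {k : ℕ}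
    (h : ∀ p : Fin n, (p : ℕ) < k → w p = v p) (b : ℕ) :
    cnt w k b = cnt v k b := by
  unfold cnt
  congr 1
  ext p
  simp only [Finset.mem_filter, Finset.mem_univ, true_and]
  constructor
  · rintro ⟨h1, h2⟩; exact ⟨h1, by rw [← h p h1]; exact h2⟩
  · rintro ⟨h1, h2⟩; exact ⟨h1, by rw [h p h1]; exact h2⟩

lemma cnt_swap_identity {n : ℕ} (w : Perm (Fin n)) (K J : Fin n) (hKJ : K ≠ J) (m t : ℕ) :
    cnt (w * Equiv.swap K J) m t
      + ((if (K : ℕ) < m ∧ (w K : ℕ) + 1 ≤ t then 1 else 0)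
        + (if (J : ℕ) < m ∧ (w J : ℕ) + 1 ≤ t then 1 else 0))
    = cnt w m t
      + ((if (K : ℕ) < m ∧ (w J : ℕ) + 1 ≤ t then 1 else 0)
        + (if (J : ℕ) < m ∧ (w K : ℕ) + 1 ≤ t then 1 else 0)) := by
  classical
  unfold cnt
  rw [Finset.card_filter, Finset.card_filter]
  have hsplit : ∀ f : Fin n → ℕ,
      ∑ p, f p = (∑ p ∈ Finset.univ \ {K, J}, f p) + (f K + f J) := by
    intro f
    rw [← Finset.sum_pair hKJ, Finset.sum_sdiff (Finset.subset_univ _)]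
  rw [hsplit, hsplit]
  have hcong : (∑ p ∈ Finset.univ \ ({K, J} : Finset (Fin n)),
        if (p : ℕ) < m ∧ ((w * Equiv.swap K J) p : ℕ) + 1 ≤ t then 1 else 0)
      = ∑ p ∈ Finset.univ \ ({K, J} : Finset (Fin n)),
        if (p : ℕ) < m ∧ (w p : ℕ) + 1 ≤ t then 1 else 0 := by
    apply Finset.sum_congr rfl
    intro p hp
    simp only [Finset.mem_sdiff, Finset.mem_insert, Finset.mem_singleton] at hp
    push_neg at hp
    rw [Equiv.Perm.mul_apply, Equiv.swap_apply_of_ne_of_ne hp.2.1 hp.2.2]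
  rw [hcong]
  have h1 : (w * Equiv.swap K J) K = w J := by
    rw [Equiv.Perm.mul_apply, Equiv.swap_apply_left]
  have h2 : (w * Equiv.swap K J) J = w K := by
    rw [Equiv.Perm.mul_apply, Equiv.swap_apply_right]
  rw [h1, h2]
  omega

lemma W_eq_of_minimal {n : ℕ} (w : Perm (Fin n)) (K : Fin n) {j₀ m t bb : ℕ}
    (hm : m ≤ j₀)
    (hmin : ∀ p : Fin n, (K : ℕ) < (p : ℕ) → (p : ℕ) < j₀ →
      (w p : ℕ) < (w K : ℕ) ∨ bb < (w p : ℕ))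
    (ht1 : (w K : ℕ) + 1 ≤ t) (ht2 : t ≤ bb) :
    W w ((K : ℕ) + 1) m t = W w ((K : ℕ) + 1) m (bb + 1) := by
  unfold W
  congr 1
  ext p
  simp only [Finset.mem_filter, Finset.mem_univ, true_and]
  constructor
  · rintro ⟨h1, h2, h3⟩
    refine ⟨h1, h2, ?_⟩
    rcases hmin p (by omega) (by omega) with h4 | h4 <;> omega
  · rintro ⟨h1, h2, h3⟩
    refine ⟨h1, h2, ?_⟩
    rcases hmin p (by omega) (by omega) with h4 | h4 <;> omega

lemma cnt_succ_fin {n : ℕ} (w : Perm (Fin n)) (K : Fin n) (b : ℕ) :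
    cnt w ((K : ℕ) + 1) b = cnt w (K : ℕ) b + (if (w K : ℕ) + 1 ≤ b then 1 else 0) := by
  have h := cnt_succ w (K : ℕ) K.isLt b
  rwa [show (⟨(K : ℕ), K.isLt⟩ : Fin n) = K from rfl] at h

lemma strict_rect {n : ℕ} (w v : Perm (Fin n))
    (hDom : ∀ m t, cnt v m t ≤ cnt w m t)
    (K : Fin n) (hpre : ∀ p : Fin n, (p : ℕ) < (K : ℕ) → w p = v p)
    (j₀ : ℕ)
    (hmin : ∀ p : Fin n, (K : ℕ) < (p : ℕ) → (p : ℕ) < j₀ →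
      (w p : ℕ) < (w K : ℕ) ∨ (v K : ℕ) < (w p : ℕ))
    (hab : (w K : ℕ) < (v K : ℕ)) :
    ∀ m t, (K : ℕ) < m → m ≤ j₀ → (w K : ℕ) + 1 ≤ t → t ≤ (v K : ℕ) →
      cnt v m t < cnt w m t := by
  intro m t hm1 hm2 ht1 ht2
  set a := (w K : ℕ) with ha
  set bb := (v K : ℕ) with hbb
  have hKm : (K : ℕ) + 1 ≤ m := hm1
  -- decompositions at threshold t
  have dw : cnt w m t = cnt w (K : ℕ) t + 1 + W w ((K : ℕ) + 1) m t := by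
    rw [cnt_split w hKm t, cnt_succ_fin w K t, if_pos (by omega)]
  have dv : cnt v m t = cnt v (K : ℕ) t + W v ((K : ℕ) + 1) m t := by
    rw [cnt_split v hKm t, cnt_succ_fin v K t, if_neg (by omega)]
    omega
  -- decompositions at threshold bb+1
  have dwb : cnt w m (bb + 1) = cnt w (K : ℕ) (bb + 1) + 1 + W w ((K : ℕ) + 1) m (bb + 1) := by
    rw [cnt_split w hKm (bb + 1), cnt_succ_fin w K (bb + 1), if_pos (by omega)]
  have dvb : cnt v m (bb + 1) = cnt v (K : ℕ) (bb + 1) + 1 + W v ((K : ℕ) + 1) m (bb + 1) := by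
    rw [cnt_split v hKm (bb + 1), cnt_succ_fin v K (bb + 1), if_pos (by omega)]
  have hpre1 : cnt w (K : ℕ) t = cnt v (K : ℕ) t := cnt_prefix_eq w v hpre t
  have hpre2 : cnt w (K : ℕ) (bb + 1) = cnt v (K : ℕ) (bb + 1) := cnt_prefix_eq w v hpre (bb + 1)
  have hXX : W w ((K : ℕ) + 1) m t = W w ((K : ℕ) + 1) m (bb + 1) :=
    W_eq_of_minimal w K hm2 hmin ht1 ht2
  have hY : W v ((K : ℕ) + 1) m t ≤ W v ((K : ℕ) + 1) m (bb + 1) :=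
    W_mono_b v _ _ (by omega)
  have hD := hDom m (bb + 1)
  omega

lemma dom_step {n : ℕ} (w v : Perm (Fin n))
    (hDom : ∀ m t, cnt v m t ≤ cnt w m t) (hne : w ≠ v) :
    ∃ K J : Fin n, (K : ℕ) < (J : ℕ) ∧ (w K : ℕ) < (w J : ℕ) ∧
      (∀ m t, cnt v m t ≤ cnt (w * Equiv.swap K J) m t) ∧
      (∀ m t, cnt (w * Equiv.swap K J) m t ≤ cnt w m t) ∧
      cnt (w * Equiv.swap K J) ((K : ℕ) + 1) ((w K : ℕ) + 1)
        < cnt w ((K : ℕ) + 1) ((w K : ℕ) + 1) := by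
  classical
  -- least position where w and v differ
  have hD : ((univ : Finset (Fin n)).filter fun p : Fin n => w p ≠ v p).Nonempty := by
    have hex : ∃ p, w p ≠ v p := by
      by_contra h
      push_neg at h
      exact hne (Equiv.ext h)
    obtain ⟨p, hp⟩ := hex
    exact ⟨p, Finset.mem_filter.mpr ⟨Finset.mem_univ _, hp⟩⟩
  set K := ((univ : Finset (Fin n)).filter fun p : Fin n => w p ≠ v p).min' hD with hKdef
  have hKne : w K ≠ v K := (Finset.mem_filter.mp (Finset.min'_mem _ hD)).2
  have hpre : ∀ p : Fin n, (p : ℕ) < (K : ℕ) → w p = v p := by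
    intro p hp
    by_contra hc
    have h1 : K ≤ p := Finset.min'_le _ p (by
      simp only [Finset.mem_filter, Finset.mem_univ, true_and]
      exact hc)
    rw [Fin.le_def] at h1
    omega
  have hab : (w K : ℕ) < (v K : ℕ) := by
    by_contra hcon
    push_neg at hcon
    have hvne : (v K : ℕ) ≠ (w K : ℕ) := fun h => hKne (Fin.ext h.symm)
    have hD1 := hDom ((K : ℕ) + 1) ((v K : ℕ) + 1)
    rw [cnt_succ_fin w K ((v K : ℕ) + 1), cnt_succ_fin v K ((v K : ℕ) + 1)] at hD1
    have hD2 := cnt_prefix_eq w v hpre ((v K : ℕ) + 1)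
    split_ifs at hD1 <;> omega
  have hq : ∃ p : Fin n, (K : ℕ) < (p : ℕ) ∧ (w K : ℕ) < (w p : ℕ) ∧ (w p : ℕ) ≤ (v K : ℕ) := by
    refine ⟨w.symm (v K), ?_, ?_, ?_⟩
    · have h1 : w (w.symm (v K)) = v K := w.apply_symm_apply _
      have hne1 : w.symm (v K) ≠ K := by
        intro h
        rw [h] at h1
        exact hKne h1
      have hge : ¬ ((w.symm (v K) : ℕ) < (K : ℕ)) := by
        intro hlt
        have h2 := hpre _ hlt
        exact hne1 (v.injective (h2 ▸ h1))
      have hne2 : (w.symm (v K) : ℕ) ≠ (K : ℕ) := fun h => hne1 (Fin.ext h)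
      omega
    · rw [Equiv.apply_symm_apply]
      exact hab
    · rw [Equiv.apply_symm_apply]
  obtain ⟨q0, hq1, hq2, hq3⟩ := hq
  have hEne : ((univ : Finset (Fin n)).filter fun p : Fin n =>
      (K : ℕ) < (p : ℕ) ∧ (w K : ℕ) < (w p : ℕ) ∧ (w p : ℕ) ≤ (v K : ℕ)).Nonempty :=
    ⟨q0, Finset.mem_filter.mpr ⟨Finset.mem_univ _, hq1, hq2, hq3⟩⟩
  set J := ((univ : Finset (Fin n)).filter fun p : Fin n =>
      (K : ℕ) < (p : ℕ) ∧ (w K : ℕ) < (w p : ℕ) ∧ (w p : ℕ) ≤ (v K : ℕ)).min' hEne with hJdef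
  obtain ⟨-, hKJ, hac, hcb⟩ := Finset.mem_filter.mp (Finset.min'_mem _ hEne)
  rw [← hJdef] at hKJ hac hcb
  have hmin : ∀ p : Fin n, (K : ℕ) < (p : ℕ) → (p : ℕ) < (J : ℕ) →
      (w p : ℕ) < (w K : ℕ) ∨ (v K : ℕ) < (w p : ℕ) := by
    intro p hp1 hp2
    by_contra hc
    push_neg at hc
    have hne2 : (w p : ℕ) ≠ (w K : ℕ) := by
      intro h
      have : p = K := w.injective (Fin.ext h)
      rw [this] at hp1
      omega
    have hmem : p ∈ ((univ : Finset (Fin n)).filter fun p : Fin n =>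
        (K : ℕ) < (p : ℕ) ∧ (w K : ℕ) < (w p : ℕ) ∧ (w p : ℕ) ≤ (v K : ℕ)) :=
      Finset.mem_filter.mpr ⟨Finset.mem_univ _, hp1, by omega, hc.2⟩
    have h1 : J ≤ p := Finset.min'_le _ p hmem
    rw [Fin.le_def] at h1
    omega
  have hKJne : K ≠ J := fun h => absurd (congrArg Fin.val h) (Nat.ne_of_lt hKJ)
  refine ⟨K, J, hKJ, hac, ?_, ?_, ?_⟩
  · intro m t
    have hid := cnt_swap_identity w K J hKJne m t
    by_cases hz : (K : ℕ) < m ∧ m ≤ (J : ℕ) ∧ (w K : ℕ) + 1 ≤ t ∧ t ≤ (w J : ℕ)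
    · have hsr := strict_rect w v hDom K hpre (J : ℕ) hmin hab m t hz.1 hz.2.1 hz.2.2.1
        (le_trans hz.2.2.2 hcb)
      split_ifs at hid <;> omega
    · have hd := hDom m t
      push_neg at hz
      split_ifs at hid <;> omega
  · intro m t
    have hid := cnt_swap_identity w K J hKJne m t
    split_ifs at hid <;> omega
  · have hid := cnt_swap_identity w K J hKJne ((K : ℕ) + 1) ((w K : ℕ) + 1)
    split_ifs at hid <;> omega

lemma dom_to_bruhat {n : ℕ} (w v : Perm (Fin n))
    (hDom : ∀ m t, cnt v m t ≤ cnt w m t) : bruhatLE n w v := by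
  suffices h : ∀ N u, (∑ m ∈ Finset.range (n + 1), ∑ t ∈ Finset.range (n + 2),
      (cnt u m t - cnt v m t)) < N → (∀ m t, cnt v m t ≤ cnt u m t) → bruhatLE n u v by
    exact h _ w (Nat.lt_succ_self _) hDom
  intro N
  induction N with
  | zero => intro u h; omega
  | succ N IH =>
    intro u hM hDu
    by_cases hne : u = v
    · rw [hne]; exact Relation.ReflTransGen.refl
    · obtain ⟨K, J, hKJ, hac, hDom', hle, hstrict⟩ := dom_step u v hDu hne
      have hKJne : K ≠ J := Fin.ne_of_val_ne (Nat.ne_of_lt hKJ)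
      have hlen : lenP n u < lenP n (u * Equiv.swap K J) := by
        have := lenP_lt_swap u K J hKJ hac
        omega
      have hM' : (∑ m ∈ Finset.range (n + 1), ∑ t ∈ Finset.range (n + 2),
            (cnt (u * Equiv.swap K J) m t - cnt v m t))
          < ∑ m ∈ Finset.range (n + 1), ∑ t ∈ Finset.range (n + 2),
            (cnt u m t - cnt v m t) := by
        apply Finset.sum_lt_sum
        · intro m _
          apply Finset.sum_le_sum
          intro t _
          have := hle m t
          omega
        · refine ⟨(K : ℕ) + 1, Finset.mem_range.mpr (by have := K.isLt; omega), ?_⟩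
          apply Finset.sum_lt_sum
          · intro t _
            have := hle ((K : ℕ) + 1) t
            omega
          · refine ⟨(u K : ℕ) + 1, Finset.mem_range.mpr (by have := (u K).isLt; omega), ?_⟩
            have h1 := hDom' ((K : ℕ) + 1) ((u K : ℕ) + 1)
            omega
      exact Relation.ReflTransGen.head ⟨⟨K, J, hKJne, rfl⟩, hlen⟩ (IH _ (by omega) hDom')

/-- The tableau criterion for Bruhat order on `S_n`: `w ≤ v` iff for every `k`
in the descent set `D_R(w) = {k : w(k) > w(k+1)}` and every `1 ≤ i ≤ k`, the
`i`-th smallest element of `{w(1), …, w(k)}` is at most the `i`-th smallest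
element of `{v(1), …, v(k)}`. -/
theorem stmt11 (n : ℕ) [NeZero n] (w v : Equiv.Perm (Fin n)) :
    bruhatLE n w v ↔
      ∀ k, 1 ≤ k → k ≤ n - 1 →
        (w ((k : ℕ) : Fin n) : ℕ) < (w ((k - 1 : ℕ) : Fin n) : ℕ) →
        ∀ i, 1 ≤ i → i ≤ k →
          (sortedPrefix n w k).getD (i - 1) 0 ≤ (sortedPrefix n v k).getD (i - 1) 0 := by
  have hn : 1 ≤ n := Nat.one_le_iff_ne_zero.mpr (NeZero.ne n)
  constructor
  · intro h k hk1 hk2 hdesc i hi1 hik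
    exact (bridge w v (show k ≤ n by omega)).mpr
      (fun b => cnt_le_of_bruhat w v h k b) (i - 1) (by omega)
  · intro h
    apply dom_to_bruhat
    apply tab_to_dom w v
    intro k hk1 hk2 hdesc b
    refine (bridge w v (show k ≤ n by omega)).mp ?_ b
    intro i hi
    simpa using h k hk1 hk2 hdesc (i + 1) (by omega) (by omega)
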